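/- Let agents and alternatives be points on the real line, with agents partitioned into districts N_1,…,N_k of sizes n_d. Fix λ ≥ 1. For each district d, call an alternative x λ-acceptable if Σ_{i∈N_d} δ(i,x) ≤ λ · Σ_{i∈N_d} δ(i,j) for every alternative j; let y_d be the rightmost λ-acceptable alternative for d, and let w be the leftmost among y_1,…,y_k. Then for every alternative o, max_d (1/n_d)Σ_{i∈N_d} δ(i,w) ≤ max{2 + 1/λ, λ} · max_d (1/n_d)Σ_{i∈N_d} δ(i,o). -/

import Mathlib

/-- λ-ARL on the line has MAX∘AVG distortion at most max {2 + 1/λ, λ}. -/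
theorem lambda_ARL_max_avg
    {ι : Type*} {κ : Type*} [Fintype κ] [Nonempty κ]
    (D : κ → Finset ι) (hD : ∀ d, (D d).Nonempty)
    (p : ι → ℝ) (A : Finset ℝ)
    (lam : ℝ) (hlam : 1 ≤ lam)
    (y : κ → ℝ)
    (hyAcc : ∀ d, y d ∈ A ∧ ∀ j ∈ A,
      ∑ i ∈ D d, |p i - y d| ≤ lam * ∑ i ∈ D d, |p i - j|)
    (hyRight : ∀ d, ∀ x ∈ A,
      (∀ j ∈ A, ∑ i ∈ D d, |p i - x| ≤ lam * ∑ i ∈ D d, |p i - j|) → x ≤ y d)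
    (w : ℝ) (hwmem : ∃ d₀, w = y d₀) (hwLeft : ∀ d, w ≤ y d)
    (o : ℝ) (ho : o ∈ A) :
    Finset.univ.sup' Finset.univ_nonempty
        (fun d => (1 / ((D d).card : ℝ)) * ∑ i ∈ D d, |p i - w|) ≤
      max (2 + 1 / lam) lam *
        Finset.univ.sup' Finset.univ_nonempty
          (fun d => (1 / ((D d).card : ℝ)) * ∑ i ∈ D d, |p i - o|) := by
  classical
  obtain ⟨d₀, hd₀⟩ := hwmem
  have hlam0 : (0:ℝ) < lam := lt_of_lt_of_le one_pos hlam
  set OPT := Finset.univ.sup' Finset.univ_nonempty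
      (fun d => (1 / ((D d).card : ℝ)) * ∑ i ∈ D d, |p i - o|) with hOPT
  have hcard : ∀ d, (0:ℝ) < ((D d).card : ℝ) := fun d => by
    exact_mod_cast Finset.card_pos.mpr (hD d)
  have hsum0 : ∀ (d : κ) (x : ℝ), 0 ≤ ∑ i ∈ D d, |p i - x| :=
    fun d x => Finset.sum_nonneg fun i _ => abs_nonneg _
  have hOPTd : ∀ d, (1 / ((D d).card : ℝ)) * ∑ i ∈ D d, |p i - o| ≤ OPT :=
    fun d => Finset.le_sup' (fun d => (1 / ((D d).card : ℝ)) * ∑ i ∈ D d, |p i - o|) (Finset.mem_univ d)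
  have hOPT0 : 0 ≤ OPT := by
    refine le_trans ?_ (hOPTd d₀)
    have := hsum0 d₀ o
    have := (hcard d₀)
    positivity
  apply Finset.sup'_le
  intro d _
  rcases le_or_gt o w with how | how
  · -- case o ≤ w : w lies between o and y d, convexity gives factor lam
    have hwy : w ≤ y d := hwLeft d
    have hoy : o ≤ y d := le_trans how hwy
    have hAcc := (hyAcc d).2 o ho
    have key : ∑ i ∈ D d, |p i - w| ≤ lam * ∑ i ∈ D d, |p i - o| := by
      rcases eq_or_lt_of_le hoy with heq | hlt
      · have hwo : w = o := le_antisymm (heq ▸ hwy) how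
        rw [hwo]
        exact le_mul_of_one_le_left (hsum0 d o) hlam
      · set t := (w - o) / (y d - o) with ht
        have hden : (0:ℝ) < y d - o := by linarith
        have ht0 : 0 ≤ t := div_nonneg (by linarith) hden.le
        have ht1 : t ≤ 1 := by rw [div_le_one hden]; linarith
        have hw : w = (1 - t) * o + t * y d := by
          have h' : t * (y d - o) = w - o := by rw [ht]; exact div_mul_cancel₀ _ hden.ne'
          linarith
        have step1 : ∑ i ∈ D d, |p i - w|
            ≤ ∑ i ∈ D d, ((1 - t) * |p i - o| + t * |p i - y d|) := by
          refine Finset.sum_le_sum fun i _ => ?_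
          have hsplit : p i - w = (1 - t) * (p i - o) + t * (p i - y d) := by
            rw [hw]; ring
          rw [hsplit]
          calc |(1 - t) * (p i - o) + t * (p i - y d)|
              ≤ |(1 - t) * (p i - o)| + |t * (p i - y d)| := abs_add_le _ _
            _ = (1 - t) * |p i - o| + t * |p i - y d| := by
                rw [abs_mul, abs_mul, abs_of_nonneg (by linarith : (0:ℝ) ≤ 1 - t),
                  abs_of_nonneg ht0]
        have step2 : ∑ i ∈ D d, ((1 - t) * |p i - o| + t * |p i - y d|)
            = (1 - t) * ∑ i ∈ D d, |p i - o| + t * ∑ i ∈ D d, |p i - y d| := by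
          rw [Finset.sum_add_distrib, Finset.mul_sum, Finset.mul_sum]
        have step3 : t * ∑ i ∈ D d, |p i - y d| ≤ t * (lam * ∑ i ∈ D d, |p i - o|) :=
          mul_le_mul_of_nonneg_left hAcc ht0
        nlinarith [hsum0 d o, mul_nonneg (mul_nonneg (by linarith : (0:ℝ) ≤ 1 - t)
          (by linarith : (0:ℝ) ≤ lam - 1)) (hsum0 d o)]
    calc (1 / ((D d).card : ℝ)) * ∑ i ∈ D d, |p i - w|
        ≤ (1 / ((D d).card : ℝ)) * (lam * ∑ i ∈ D d, |p i - o|) := by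
          apply mul_le_mul_of_nonneg_left key
          positivity
      _ = lam * ((1 / ((D d).card : ℝ)) * ∑ i ∈ D d, |p i - o|) := by ring
      _ ≤ lam * OPT := mul_le_mul_of_nonneg_left (hOPTd d) hlam0.le
      _ ≤ max (2 + 1 / lam) lam * OPT :=
          mul_le_mul_of_nonneg_right (le_max_right _ _) hOPT0
  · -- case w < o
    obtain ⟨js, hjs, hjsmin⟩ :=
      Finset.exists_min_image A (fun j => ∑ i ∈ D d₀, |p i - j|) ⟨o, ho⟩
    have hjsacc : ∀ j ∈ A, ∑ i ∈ D d₀, |p i - js| ≤ lam * ∑ i ∈ D d₀, |p i - j| :=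
      fun j hj => le_trans (hjsmin j hj) (le_mul_of_one_le_left (hsum0 d₀ j) hlam)
    have hjsw : js ≤ w := by
      rw [hd₀]; exact hyRight d₀ js hjs hjsacc
    have honot : ¬ (∀ j ∈ A, ∑ i ∈ D d₀, |p i - o| ≤ lam * ∑ i ∈ D d₀, |p i - j|) := by
      intro h
      have := hyRight d₀ o ho h
      rw [← hd₀] at this
      linarith
    push_neg at honot
    obtain ⟨j', hj', hj'lt⟩ := honot
    have hjslt : lam * ∑ i ∈ D d₀, |p i - js| < ∑ i ∈ D d₀, |p i - o| :=
      lt_of_le_of_lt (mul_le_mul_of_nonneg_left (hjsmin j' hj') hlam0.le) hj'lt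
    -- n₀ * (o - js) ≤ Σ|p-o| + Σ|p-js|
    have hgap : ((D d₀).card : ℝ) * (o - js)
        ≤ (∑ i ∈ D d₀, |p i - o|) + ∑ i ∈ D d₀, |p i - js| := by
      have h1 : ∀ i ∈ D d₀, o - js ≤ |p i - o| + |p i - js| := by
        intro i _
        have h2 : o - js ≤ |o - js| := le_abs_self _
        have h3 : |o - js| ≤ |o - p i| + |p i - js| := abs_sub_le _ _ _
        have h4 : |o - p i| = |p i - o| := abs_sub_comm _ _
        linarith
      have := Finset.sum_le_sum h1
      simp only [Finset.sum_add_distrib, Finset.sum_const, nsmul_eq_mul] at this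
      linarith
    -- avg_d(w) ≤ avg_d(o) + (o - w)
    have hstep : ∑ i ∈ D d, |p i - w| ≤ (∑ i ∈ D d, |p i - o|) + ((D d).card : ℝ) * (o - w) := by
      have h1 : ∀ i ∈ D d, |p i - w| ≤ |p i - o| + (o - w) := by
        intro i _
        have h3 : |p i - w| ≤ |p i - o| + |o - w| := abs_sub_le _ _ _
        have h4 : |o - w| = o - w := abs_of_pos (by linarith)
        linarith
      have := Finset.sum_le_sum h1
      simp only [Finset.sum_add_distrib, Finset.sum_const, nsmul_eq_mul] at this
      linarith
    -- put together
    have hao : (1 / ((D d).card : ℝ)) * ∑ i ∈ D d, |p i - o| ≤ OPT := hOPTd d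
    have ha0 : (1 / ((D d₀).card : ℝ)) * ∑ i ∈ D d₀, |p i - o| ≤ OPT := hOPTd d₀
    set n := ((D d).card : ℝ)
    set n₀ := ((D d₀).card : ℝ)
    have hn : 0 < n := hcard d
    have hn₀ : 0 < n₀ := hcard d₀
    -- o - w ≤ o - js ≤ (Σ|p-o| + Σ|p-js|)/n₀ ≤ (1 + 1/lam) * avg₀(o)
    have hgap' : o - w ≤ (1 + 1/lam) * ((1 / n₀) * ∑ i ∈ D d₀, |p i - o|) := by
      have h5 : o - w ≤ o - js := by linarith
      have h6 : o - js ≤ (1/n₀) * ((∑ i ∈ D d₀, |p i - o|) + ∑ i ∈ D d₀, |p i - js|) := by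
        rw [one_div, inv_mul_eq_div, le_div_iff₀ hn₀]
        nlinarith [hgap]
      have h7 : ∑ i ∈ D d₀, |p i - js| ≤ (1/lam) * ∑ i ∈ D d₀, |p i - o| := by
        rw [one_div, inv_mul_eq_div, le_div_iff₀ hlam0]
        nlinarith [hjslt]
      have h8 : (1/n₀) * ((∑ i ∈ D d₀, |p i - o|) + ∑ i ∈ D d₀, |p i - js|)
          ≤ (1 + 1/lam) * ((1 / n₀) * ∑ i ∈ D d₀, |p i - o|) := by
        have : (1:ℝ)/n₀ ≥ 0 := by positivity
        nlinarith [h7]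
      linarith
    have hOw : o - w ≤ (1 + 1/lam) * OPT := by
      have h9 : (0:ℝ) ≤ 1 + 1/lam := by positivity
      calc o - w ≤ (1 + 1/lam) * ((1 / n₀) * ∑ i ∈ D d₀, |p i - o|) := hgap'
        _ ≤ (1 + 1/lam) * OPT := mul_le_mul_of_nonneg_left ha0 h9
    calc (1 / n) * ∑ i ∈ D d, |p i - w|
        ≤ (1 / n) * ((∑ i ∈ D d, |p i - o|) + n * (o - w)) := by
          apply mul_le_mul_of_nonneg_left hstep; positivity
      _ = (1 / n) * ∑ i ∈ D d, |p i - o| + (o - w) := by field_simp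
      _ ≤ OPT + (1 + 1/lam) * OPT := add_le_add hao hOw
      _ = (2 + 1/lam) * OPT := by ring
      _ ≤ max (2 + 1 / lam) lam * OPT :=
          mul_le_mul_of_nonneg_right (le_max_left _ _) hOPT0
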